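/- arXiv:math/0602438 — 2 statements merged into one kernel-verified Lean document; each statement's English description precedes it below -/
import Mathlib

section
/- Let f ∈ ℤ[x₁,…,xₙ] and p a prime. Then |E_f(p²)| ≤ p^{-n} · #{x ∈ (ℤ/pℤ)^n : (∂f/∂xᵢ)(x) = 0 for all i = 1,…,n}, where E_f(p²) := p^{-2n} Σ_{x ∈ (ℤ/p²ℤ)^n} exp(2πi f(x)/p²). -/
open Complex Finset

/-- `E f N = N^{-n} · ∑_{x ∈ (ℤ/Nℤ)^n} exp(2πi f(x)/N)`, summing over the
    representatives `0,…,N-1` of each coordinate. -/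
noncomputable def expSum {n : ℕ} (f : MvPolynomial (Fin n) ℤ) (N : ℕ) : ℂ :=
  ((N : ℂ)⁻¹) ^ n *
    ∑ x : Fin n → Fin N,
      Complex.exp (2 * Real.pi * Complex.I *
        (MvPolynomial.eval (fun i => ((x i : ℕ) : ℤ)) f : ℂ) / N)



lemma taylor_dvd {n : ℕ} (f : MvPolynomial (Fin n) ℤ) (a b : Fin n → ℤ) (c : ℤ) :
    c ^ 2 ∣ MvPolynomial.eval (fun i => a i + c * b i) f -
      (MvPolynomial.eval a f +
        c * ∑ i, b i * MvPolynomial.eval a (MvPolynomial.pderiv i f)) := by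
  induction f using MvPolynomial.induction_on with
  | C r => simp
  | add q r hq hr =>
      have h := dvd_add hq hr
      convert h using 1
      · rfl
      simp only [map_add, mul_add, Finset.sum_add_distrib]
      ring
  | mul_X q i hq =>
      obtain ⟨m, hm⟩ := hq
      set E' := MvPolynomial.eval (fun i => a i + c * b i) q with hE'
      set E := MvPolynomial.eval a q with hE
      set S := ∑ j, b j * MvPolynomial.eval a (MvPolynomial.pderiv j q) with hS
      have hsum : ∑ j, b j * MvPolynomial.eval a (MvPolynomial.pderiv j (q * MvPolynomial.X i))
          = a i * S + b i * E := by
        have hd : ∀ j, MvPolynomial.pderiv j (q * MvPolynomial.X i)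
            = MvPolynomial.pderiv j q * MvPolynomial.X i
              + q * MvPolynomial.pderiv j (MvPolynomial.X i) := fun j => MvPolynomial.pderiv_mul
        simp only [hd, map_add, map_mul, MvPolynomial.eval_X, MvPolynomial.pderiv_X,
          Pi.single_apply, apply_ite (MvPolynomial.eval a), map_one, map_zero, mul_ite, mul_one,
          mul_zero, mul_add, Finset.sum_add_distrib, Finset.sum_ite_eq, Finset.mem_univ, if_true,
          hS, Finset.mul_sum]
        congr 1
        · exact Finset.sum_congr rfl fun j _ => by ring

      have hq' : E' = E + c * S + c ^ 2 * m := by linarith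
      refine ⟨a i * m + c * b i * m + b i * S, ?_⟩
      rw [map_mul, map_mul, MvPolynomial.eval_X, MvPolynomial.eval_X, hsum, ← hE', ← hE, hq']
      ring


lemma geom_exp_sum (p : ℕ) (hp : 0 < p) (d : ℤ) :
    ∑ k : Fin p, Complex.exp (2 * Real.pi * Complex.I * ((k : ℕ) * d : ℤ) / p)
      = if (p : ℤ) ∣ d then (p : ℂ) else 0 := by
  have hp0 : (p : ℂ) ≠ 0 := Nat.cast_ne_zero.mpr hp.ne'
  set z : ℂ := Complex.exp (2 * Real.pi * Complex.I * d / p) with hz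
  have hterm : ∀ k : Fin p,
      Complex.exp (2 * Real.pi * Complex.I * ((k : ℕ) * d : ℤ) / p) = z ^ (k : ℕ) := by
    intro k
    rw [hz, ← Complex.exp_nat_mul]
    congr 1
    push_cast
    ring
  simp only [hterm]
  rw [Fin.sum_univ_eq_sum_range (fun k => z ^ k) p]
  have hzp : z ^ p = 1 := by
    rw [hz, ← Complex.exp_nat_mul]
    have : (p : ℂ) * (2 * Real.pi * Complex.I * d / p) = d * (2 * Real.pi * Complex.I) := by
      field_simp
    rw [this, Complex.exp_int_mul_two_pi_mul_I]
  by_cases hdvd : (p : ℤ) ∣ d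
  · rw [if_pos hdvd]
    obtain ⟨e, he⟩ := hdvd
    have hz1 : z = 1 := by
      rw [hz, he]
      have : 2 * Real.pi * Complex.I * ((p * e : ℤ) : ℂ) / p = (e : ℂ) * (2 * Real.pi * Complex.I) := by
        push_cast; field_simp
      rw [this, Complex.exp_int_mul_two_pi_mul_I]
    simp [hz1]
  · have hz1 : z ≠ 1 := by
      intro h
      rw [hz, Complex.exp_eq_one_iff] at h
      obtain ⟨m, hm⟩ := h
      apply hdvd
      refine ⟨m, ?_⟩
      have h2 : (2 : ℂ) * Real.pi * Complex.I ≠ 0 := by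
        simp [Real.pi_ne_zero, Complex.I_ne_zero]
      have h3 : (2 * Real.pi * Complex.I) * (d : ℂ) = (2 * Real.pi * Complex.I) * ((p : ℂ) * m) := by
        field_simp at hm
        linear_combination (2 * Real.pi * Complex.I) * hm
      have : (d : ℂ) = (p : ℂ) * m := mul_left_cancel₀ h2 h3
      exact_mod_cast this
    rw [geom_sum_eq hz1, hzp]
    simp [hdvd]


def splitEquiv (n p : ℕ) (hp : 0 < p) :
    ((Fin n → Fin p) × (Fin n → Fin p)) ≃ (Fin n → Fin (p ^ 2)) where
  toFun ab i := ⟨(ab.1 i : ℕ) + p * (ab.2 i : ℕ), by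
    have h1 := (ab.1 i).2
    have h2 := (ab.2 i).2
    have h3 : p * ((ab.2 i : ℕ) + 1) ≤ p * p := Nat.mul_le_mul_left _ h2
    rw [Nat.mul_add, Nat.mul_one] at h3
    rw [pow_two]
    linarith⟩
  invFun x := (fun i => ⟨(x i : ℕ) % p, Nat.mod_lt _ hp⟩,
    fun i => ⟨(x i : ℕ) / p,
      Nat.div_lt_of_lt_mul (by simpa [pow_two, mul_comm] using (x i).2)⟩)
  left_inv := by
    rintro ⟨a, b⟩
    refine Prod.ext ?_ ?_ <;> funext i <;> apply Fin.ext <;> simp only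
    · rw [Nat.add_mul_mod_self_left, Nat.mod_eq_of_lt (a i).2]
    · rw [Nat.add_mul_div_left _ _ hp, Nat.div_eq_of_lt (a i).2, zero_add]
  right_inv := by
    intro x
    funext i
    apply Fin.ext
    simp only
    exact Nat.mod_add_div _ _

/-- |E_f(p²)| ≤ p^{-n} · #{x ∈ (ℤ/pℤ)^n : ∇f(x) = 0}, where the 𝔽_p-points of
    the critical locus are counted via representatives in {0,…,p-1}. -/
theorem abs_expSum_p_sq_le {n : ℕ} (f : MvPolynomial (Fin n) ℤ) (p : ℕ)
    (hp : p.Prime) :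
    ‖expSum f (p ^ 2)‖ ≤
      ((p : ℝ)⁻¹) ^ n *
        (Finset.univ.filter (fun x : Fin n → Fin p =>
          ∀ i, (p : ℤ) ∣ MvPolynomial.eval (fun j => ((x j : ℕ) : ℤ))
            (MvPolynomial.pderiv i f))).card := by
  have hp0 : 0 < p := hp.pos
  have hpC : (p : ℂ) ≠ 0 := Nat.cast_ne_zero.mpr hp0.ne'
  have hpR : (p : ℝ) ≠ 0 := Nat.cast_ne_zero.mpr hp0.ne'
  set F : (Fin n → Fin p) → ℤ := fun a => MvPolynomial.eval (fun j => ((a j : ℕ) : ℤ)) f with hF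
  set D : Fin n → (Fin n → Fin p) → ℤ :=
    fun i a => MvPolynomial.eval (fun j => ((a j : ℕ) : ℤ)) (MvPolynomial.pderiv i f) with hD
  -- key pointwise identity
  have key : ∀ a b : Fin n → Fin p,
      Complex.exp (2 * Real.pi * Complex.I *
        ((MvPolynomial.eval (fun i => ((((splitEquiv n p hp0) (a, b)) i : ℕ) : ℤ)) f : ℤ) : ℂ)
        / ((p ^ 2 : ℕ) : ℂ))
      = Complex.exp (2 * Real.pi * Complex.I * ((F a : ℤ) : ℂ) / ((p ^ 2 : ℕ) : ℂ)) *
          ∏ i, Complex.exp (2 * Real.pi * Complex.I * (((b i : ℕ) * D i a : ℤ) : ℂ) / (p : ℂ)) := by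
    intro a b
    have hargs : (fun i => ((((splitEquiv n p hp0) (a, b)) i : ℕ) : ℤ))
        = fun i => ((a i : ℕ) : ℤ) + (p : ℤ) * ((b i : ℕ) : ℤ) := by
      funext i
      simp only [splitEquiv, Equiv.coe_fn_mk]
      push_cast
      ring
    have hm := taylor_dvd f (fun j => ((a j : ℕ) : ℤ)) (fun j => ((b j : ℕ) : ℤ)) (p : ℤ)
    obtain ⟨m, hm⟩ := hm
    rw [hargs]
    set S : ℤ := ∑ i, ((b i : ℕ) : ℤ) * D i a with hS
    have heval : MvPolynomial.eval (fun i => ((a i : ℕ) : ℤ) + (p : ℤ) * ((b i : ℕ) : ℤ)) f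
        = F a + p * S + (p : ℤ) ^ 2 * m := by
      rw [hS, hF, hD]
      linarith [hm]
    have hqc : ((p ^ 2 : ℕ) : ℂ) = (p : ℂ) ^ 2 := by push_cast; ring
    have hsplit : 2 * Real.pi * Complex.I * ((F a + (p : ℤ) * S + (p : ℤ) ^ 2 * m : ℤ) : ℂ)
          / ((p ^ 2 : ℕ) : ℂ)
        = 2 * Real.pi * Complex.I * ((F a : ℤ) : ℂ) / ((p ^ 2 : ℕ) : ℂ)
          + 2 * Real.pi * Complex.I * ((S : ℤ) : ℂ) / (p : ℂ)
          + (m : ℂ) * (2 * Real.pi * Complex.I) := by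
      rw [hqc]
      push_cast
      field_simp
    rw [heval, hsplit, Complex.exp_add, Complex.exp_add, Complex.exp_int_mul_two_pi_mul_I,
      mul_one]
    congr 1
    rw [← Complex.exp_sum]
    congr 1
    rw [hS]
    push_cast
    rw [Finset.mul_sum, Finset.sum_div]
  -- rewrite the big sum
  have hsum : (∑ x : Fin n → Fin (p ^ 2),
        Complex.exp (2 * Real.pi * Complex.I *
          ((MvPolynomial.eval (fun i => ((x i : ℕ) : ℤ)) f : ℤ) : ℂ) / ((p ^ 2 : ℕ) : ℂ)))
      = ∑ a : Fin n → Fin p,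
          Complex.exp (2 * Real.pi * Complex.I * ((F a : ℤ) : ℂ) / ((p ^ 2 : ℕ) : ℂ)) *
            (if ∀ i, (p : ℤ) ∣ D i a then (p : ℂ) ^ n else 0) := by
    rw [← Equiv.sum_comp (splitEquiv n p hp0) (fun x => Complex.exp (2 * Real.pi * Complex.I *
      ((MvPolynomial.eval (fun i => ((x i : ℕ) : ℤ)) f : ℤ) : ℂ) / ((p ^ 2 : ℕ) : ℂ)))]
    rw [Fintype.sum_prod_type]
    refine Finset.sum_congr rfl fun a _ => ?_
    have step1 : ∀ b : Fin n → Fin p,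
        Complex.exp (2 * Real.pi * Complex.I *
          ((MvPolynomial.eval (fun i => ((((splitEquiv n p hp0) (a, b)) i : ℕ) : ℤ)) f : ℤ) : ℂ)
          / ((p ^ 2 : ℕ) : ℂ))
        = Complex.exp (2 * Real.pi * Complex.I * ((F a : ℤ) : ℂ) / ((p ^ 2 : ℕ) : ℂ)) *
            ∏ i, Complex.exp (2 * Real.pi * Complex.I *
              (((b i : ℕ) * D i a : ℤ) : ℂ) / (p : ℂ)) := key a
    simp only [step1]
    rw [← Finset.mul_sum]
    congr 1
    rw [← Fintype.prod_sum (fun i (k : Fin p) => Complex.exp (2 * Real.pi * Complex.I *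
      (((k : ℕ) * D i a : ℤ) : ℂ) / (p : ℂ)))]
    have hgeom : ∀ i, (∑ k : Fin p, Complex.exp (2 * Real.pi * Complex.I *
        (((k : ℕ) * D i a : ℤ) : ℂ) / (p : ℂ))) = if (p : ℤ) ∣ D i a then (p : ℂ) else 0 :=
      fun i => geom_exp_sum p hp0 (D i a)
    simp only [hgeom]
    by_cases h : ∀ i, (p : ℤ) ∣ D i a
    · simp [h, Finset.prod_const]
    · obtain ⟨i, hi⟩ := not_forall.mp h
      rw [if_neg h]
      exact Finset.prod_eq_zero (Finset.mem_univ i) (by rw [if_neg hi])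
  -- absolute value bound
  have habs1 : ∀ a : Fin n → Fin p,
      ‖Complex.exp (2 * Real.pi * Complex.I * ((F a : ℤ) : ℂ) / ((p ^ 2 : ℕ) : ℂ)) *
        (if ∀ i, (p : ℤ) ∣ D i a then (p : ℂ) ^ n else 0)‖
      = if ∀ i, (p : ℤ) ∣ D i a then (p : ℝ) ^ n else 0 := by
    intro a
    rw [norm_mul]
    have h1 : ‖Complex.exp (2 * Real.pi * Complex.I * ((F a : ℤ) : ℂ)
        / ((p ^ 2 : ℕ) : ℂ))‖ = 1 := by
      have harg : 2 * Real.pi * Complex.I * ((F a : ℤ) : ℂ) / ((p ^ 2 : ℕ) : ℂ)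
          = ((2 * Real.pi * (F a : ℝ) / ((p ^ 2 : ℕ) : ℝ) : ℝ) : ℂ) * Complex.I := by
        push_cast
        ring
      rw [harg, Complex.norm_exp_ofReal_mul_I]
    rw [h1, one_mul, apply_ite norm, norm_pow, Complex.norm_natCast, norm_zero]
  have hexp : expSum f (p ^ 2) = (((p ^ 2 : ℕ) : ℂ)⁻¹) ^ n *
      ∑ x : Fin n → Fin (p ^ 2), Complex.exp (2 * Real.pi * Complex.I *
        ((MvPolynomial.eval (fun i => ((x i : ℕ) : ℤ)) f : ℤ) : ℂ) / ((p ^ 2 : ℕ) : ℂ)) := rfl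
  rw [hexp, hsum, norm_mul, norm_pow, norm_inv, Complex.norm_natCast]
  have hle := norm_sum_le Finset.univ
    (fun a : Fin n → Fin p =>
      Complex.exp (2 * Real.pi * Complex.I * ((F a : ℤ) : ℂ) / ((p ^ 2 : ℕ) : ℂ)) *
        (if ∀ i, (p : ℤ) ∣ D i a then (p : ℂ) ^ n else 0))
  simp only [habs1] at hle
  have hcard : (∑ a : Fin n → Fin p, if ∀ i, (p : ℤ) ∣ D i a then (p : ℝ) ^ n else 0)
      = ((Finset.univ.filter (fun x : Fin n → Fin p =>
          ∀ i, (p : ℤ) ∣ MvPolynomial.eval (fun j => ((x j : ℕ) : ℤ))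
            (MvPolynomial.pderiv i f))).card : ℝ) * (p : ℝ) ^ n := by
    rw [← Finset.sum_filter, Finset.sum_const, nsmul_eq_mul]
  rw [hcard] at hle
  calc (((p ^ 2 : ℕ) : ℝ)⁻¹) ^ n * ‖∑ a : Fin n → Fin p,
        Complex.exp (2 * Real.pi * Complex.I * ((F a : ℤ) : ℂ) / ((p ^ 2 : ℕ) : ℂ)) *
          (if ∀ i, (p : ℤ) ∣ D i a then (p : ℂ) ^ n else 0)‖
      ≤ (((p ^ 2 : ℕ) : ℝ)⁻¹) ^ n * (((Finset.univ.filter (fun x : Fin n → Fin p =>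
          ∀ i, (p : ℤ) ∣ MvPolynomial.eval (fun j => ((x j : ℕ) : ℤ))
            (MvPolynomial.pderiv i f))).card : ℝ) * (p : ℝ) ^ n) := by
        apply mul_le_mul_of_nonneg_left hle
        positivity
    _ = ((p : ℝ)⁻¹) ^ n * ((Finset.univ.filter (fun x : Fin n → Fin p =>
          ∀ i, (p : ℤ) ∣ MvPolynomial.eval (fun j => ((x j : ℕ) : ℤ))
            (MvPolynomial.pderiv i f))).card : ℝ) := by
        have hq : ((p ^ 2 : ℕ) : ℝ) = (p : ℝ) ^ 2 := by push_cast; ring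
        rw [hq]
        rw [mul_comm ((((Finset.univ.filter (fun x : Fin n → Fin p =>
          ∀ i, (p : ℤ) ∣ MvPolynomial.eval (fun j => ((x j : ℕ) : ℤ))
            (MvPolynomial.pderiv i f))).card : ℕ) : ℝ)) ((p : ℝ) ^ n), ← mul_assoc,
          ← mul_pow]
        congr 2
        field_simp
end

section
/- Let f ∈ ℤ[x₁,…,xₙ], p a prime, and suppose #{x ∈ (ℤ/pℤ)^n : ∇f(x) = 0} ≤ D·p^{δ} for some real D ≥ 0 and integer δ with 0 ≤ δ ≤ n. Then |E_f(p²)| ≤ D·p^{2·(δ-n)/2} = D·(p²)^{(−n+δ)/2}. -/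
open Complex Finset
open MvPolynomial

lemma taylor_aux {n : ℕ} (f : MvPolynomial (Fin n) ℤ) (u v : Fin n → ℤ) (q : ℤ) :
    ∃ k : ℤ, MvPolynomial.eval (fun i => u i + q * v i) f
      = MvPolynomial.eval u f + q * (∑ i, v i * MvPolynomial.eval u (MvPolynomial.pderiv i f))
        + q ^ 2 * k := by
  induction f using MvPolynomial.induction_on with
  | C a => exact ⟨0, by simp⟩
  | add f g hf hg =>
      obtain ⟨k1, h1⟩ := hf; obtain ⟨k2, h2⟩ := hg
      refine ⟨k1 + k2, ?_⟩
      simp only [map_add, h1, h2, mul_add, Finset.sum_add_distrib]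
      ring
  | mul_X f j hf =>
      obtain ⟨k, hk⟩ := hf
      refine ⟨v j * (∑ i, v i * MvPolynomial.eval u (MvPolynomial.pderiv i f))
        + k * (u j + q * v j), ?_⟩
      have hs : (∑ i, v i * MvPolynomial.eval u (MvPolynomial.pderiv i (f * X j)))
          = (∑ i, v i * MvPolynomial.eval u (MvPolynomial.pderiv i f)) * u j
            + v j * MvPolynomial.eval u f := by
        simp only [pderiv_mul, pderiv_X, map_add, map_mul, eval_X, Pi.single_apply, mul_add,
          Finset.sum_add_distrib, apply_ite (MvPolynomial.eval u), map_one, map_zero, mul_ite,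
          mul_one, mul_zero]
        rw [Finset.sum_ite_eq]
        simp [Finset.sum_mul, mul_assoc, mul_comm]
        rw [Finset.mul_sum]
        exact Finset.sum_congr rfl fun i _ => by ring
      simp only [map_mul, eval_X]
      rw [hk, hs]
      ring

lemma charSum (p : ℕ) (hp : 0 < p) (c : ℤ) :
    ∑ t : Fin p, Complex.exp (2 * Real.pi * Complex.I * (c : ℂ) * (t : ℕ) / p)
      = if (p : ℤ) ∣ c then (p : ℂ) else 0 := by
  have hpC : (p : ℂ) ≠ 0 := Nat.cast_ne_zero.mpr hp.ne'
  have h2 : (2 * (Real.pi : ℂ) * Complex.I) ≠ 0 := by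
    simp [Real.pi_ne_zero, Complex.I_ne_zero]
  set ζ : ℂ := Complex.exp (2 * Real.pi * Complex.I * (c : ℂ) / p) with hζ
  have hterm : ∀ t : Fin p, Complex.exp (2 * Real.pi * Complex.I * (c : ℂ) * (t:ℕ) / p)
      = ζ ^ (t : ℕ) := by
    intro t
    rw [hζ, ← Complex.exp_nat_mul]
    congr 1
    ring
  split_ifs with h
  · obtain ⟨m, hm⟩ := h
    have h1 : ∀ t : Fin p, Complex.exp (2 * Real.pi * Complex.I * (c : ℂ) * (t:ℕ) / p) = 1 := by
      intro t
      rw [show (2 * Real.pi * Complex.I * (c : ℂ) * (t:ℕ) / p)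
        = ((m * t : ℤ) : ℂ) * (2 * Real.pi * Complex.I) by
          rw [hm]; push_cast; field_simp]
      exact Complex.exp_int_mul_two_pi_mul_I _
    rw [Fintype.sum_congr _ _ h1]
    simp
  · have hζ1 : ζ ≠ 1 := by
      intro hone
      rw [hζ, Complex.exp_eq_one_iff] at hone
      obtain ⟨m, hm⟩ := hone
      apply h
      have hcm : (c : ℂ) = ((m * p : ℤ) : ℂ) := by
        field_simp at hm
        push_cast
        linear_combination hm
      have hc : c = m * p := by exact_mod_cast hcm
      exact ⟨m, by rw [hc, mul_comm]⟩
    have hζp : ζ ^ p = 1 := by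
      rw [hζ, ← Complex.exp_nat_mul]
      rw [show (p:ℂ) * (2 * Real.pi * Complex.I * (c:ℂ) / p) = (c:ℂ) * (2 * Real.pi * Complex.I) by
        field_simp]
      exact Complex.exp_int_mul_two_pi_mul_I c
    rw [Fintype.sum_congr _ _ hterm, Fin.sum_univ_eq_sum_range (fun i => ζ ^ i),
      geom_sum_eq hζ1, hζp]
    simp

lemma vecCharSum {n : ℕ} (p : ℕ) (hp : 0 < p) (c : Fin n → ℤ) :
    ∑ v : Fin n → Fin p, Complex.exp (2 * Real.pi * Complex.I *
        ((∑ i, ((v i : ℕ) : ℤ) * c i : ℤ) : ℂ) / p)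
      = if (∀ i, (p : ℤ) ∣ c i) then (p : ℂ) ^ n else 0 := by
  have step : ∀ v : Fin n → Fin p,
      Complex.exp (2 * Real.pi * Complex.I * ((∑ i, ((v i : ℕ) : ℤ) * c i : ℤ) : ℂ) / p)
        = ∏ i, Complex.exp (2 * Real.pi * Complex.I * ((c i : ℤ) : ℂ) * ((v i : ℕ) : ℕ) / p) := by
    intro v
    rw [← Complex.exp_sum]
    congr 1
    push_cast
    rw [Finset.mul_sum, Finset.sum_div]
    exact Finset.sum_congr rfl fun i _ => by ring
  rw [Fintype.sum_congr _ _ step, ← Fintype.piFinset_univ,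
    ← Finset.prod_univ_sum (fun _ => (Finset.univ : Finset (Fin p)))
      (fun i t => Complex.exp (2 * Real.pi * Complex.I * ((c i : ℤ) : ℂ) * ((t : ℕ) : ℂ) / p))]
  rw [Finset.prod_congr rfl fun i _ => charSum p hp (c i)]
  by_cases h : ∀ i, (p : ℤ) ∣ c i
  · simp [h]
  · push_neg at h
    obtain ⟨i, hi⟩ := h
    rw [if_neg (by push_neg; exact ⟨i, hi⟩)]
    exact Finset.prod_eq_zero (Finset.mem_univ i) (by simp [hi])

/-- If the number of 𝔽_p-points of the critical locus of f is at most D·p^δ with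
    0 ≤ δ ≤ n, then |E_f(p²)| ≤ D·(p²)^{(−n+δ)/2}. -/
theorem abs_expSum_p_sq_le_of_card_le {n : ℕ} (f : MvPolynomial (Fin n) ℤ) (p : ℕ)
    (hp : p.Prime) (D : ℝ) (hD : 0 ≤ D) (δ : ℕ) (hδ : δ ≤ n)
    (hcard : ((Finset.univ.filter (fun x : Fin n → Fin p =>
        ∀ i, (p : ℤ) ∣ MvPolynomial.eval (fun j => ((x j : ℕ) : ℤ))
          (MvPolynomial.pderiv i f))).card : ℝ) ≤ D * (p : ℝ) ^ δ) :
    ‖expSum f (p ^ 2)‖ ≤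
      D * ((p : ℝ) ^ 2) ^ (((-n : ℝ) + δ) / 2) := by
  classical
  have hp0 : 0 < p := hp.pos
  have hpC : (p : ℂ) ≠ 0 := Nat.cast_ne_zero.mpr hp0.ne'
  have hpR : (0 : ℝ) < p := by exact_mod_cast hp0
  set P : Finset (Fin n → Fin p) := Finset.univ.filter (fun x : Fin n → Fin p =>
        ∀ i, (p : ℤ) ∣ MvPolynomial.eval (fun j => ((x j : ℕ) : ℤ))
          (MvPolynomial.pderiv i f)) with hP
  let e : ((Fin n → Fin p) × (Fin n → Fin p)) ≃ (Fin n → Fin (p ^ 2)) :=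
    (Equiv.arrowProdEquivProdArrow (Fin n) (fun _ => Fin p) (fun _ => Fin p)).symm.trans
      (Equiv.piCongrRight fun _ => finProdFinEquiv.trans (finCongr (pow_two p).symm))
  have he : ∀ (a b : Fin n → Fin p) (i : Fin n),
      (((e (a, b) i : Fin (p ^ 2)) : ℕ) : ℤ) = ((b i : ℕ) : ℤ) + (p : ℤ) * ((a i : ℕ) : ℤ) := by
    intro a b i
    show (((finCongr (pow_two p).symm (finProdFinEquiv (a i, b i)) : Fin (p^2)) : ℕ) : ℤ) = _
    simp [finProdFinEquiv]
  have hsum : (∑ x : Fin n → Fin (p ^ 2),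
        Complex.exp (2 * Real.pi * Complex.I *
          ((MvPolynomial.eval (fun i => ((x i : ℕ) : ℤ)) f : ℤ) : ℂ) / ((p ^ 2 : ℕ) : ℂ)))
      = (p : ℂ) ^ n * ∑ b ∈ P, Complex.exp (2 * Real.pi * Complex.I *
          ((MvPolynomial.eval (fun j => ((b j : ℕ) : ℤ)) f : ℤ) : ℂ) / ((p ^ 2 : ℕ) : ℂ)) := by
    rw [← Equiv.sum_comp e, Fintype.sum_prod_type, Finset.sum_comm]
    have inner : ∀ b : Fin n → Fin p,
        (∑ a : Fin n → Fin p, Complex.exp (2 * Real.pi * Complex.I *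
            ((MvPolynomial.eval (fun i => ((e (a, b) i : ℕ) : ℤ)) f : ℤ) : ℂ) / ((p ^ 2 : ℕ) : ℂ)))
        = Complex.exp (2 * Real.pi * Complex.I *
            ((MvPolynomial.eval (fun j => ((b j : ℕ) : ℤ)) f : ℤ) : ℂ) / ((p ^ 2 : ℕ) : ℂ)) *
          (if (∀ i, (p : ℤ) ∣ MvPolynomial.eval (fun j => ((b j : ℕ) : ℤ))
              (MvPolynomial.pderiv i f)) then (p : ℂ) ^ n else 0) := by
      intro b
      have hterm : ∀ a : Fin n → Fin p,
          Complex.exp (2 * Real.pi * Complex.I *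
            ((MvPolynomial.eval (fun i => ((e (a, b) i : ℕ) : ℤ)) f : ℤ) : ℂ) / ((p ^ 2 : ℕ) : ℂ))
          = Complex.exp (2 * Real.pi * Complex.I *
              ((MvPolynomial.eval (fun j => ((b j : ℕ) : ℤ)) f : ℤ) : ℂ) / ((p ^ 2 : ℕ) : ℂ)) *
            Complex.exp (2 * Real.pi * Complex.I *
              ((∑ i, ((a i : ℕ) : ℤ) * MvPolynomial.eval (fun j => ((b j : ℕ) : ℤ))
                (MvPolynomial.pderiv i f) : ℤ) : ℂ) / p) := by
        intro a
        obtain ⟨k, hk⟩ := taylor_aux f (fun j => ((b j : ℕ) : ℤ)) (fun j => ((a j : ℕ) : ℤ)) p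
        have heval : MvPolynomial.eval (fun i => ((e (a, b) i : ℕ) : ℤ)) f
            = MvPolynomial.eval (fun j => ((b j : ℕ) : ℤ)) f
              + (p : ℤ) * (∑ i, ((a i : ℕ) : ℤ) * MvPolynomial.eval (fun j => ((b j : ℕ) : ℤ))
                  (MvPolynomial.pderiv i f))
              + (p : ℤ) ^ 2 * k := by
          rw [show (fun i => ((e (a, b) i : ℕ) : ℤ))
            = (fun i => ((b i : ℕ) : ℤ) + (p : ℤ) * ((a i : ℕ) : ℤ)) from funext (he a b)]
          exact hk
        rw [heval]
        rw [show (2 * (Real.pi : ℂ) * Complex.I *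
            ((MvPolynomial.eval (fun j => ((b j : ℕ) : ℤ)) f
              + (p : ℤ) * (∑ i, ((a i : ℕ) : ℤ) * MvPolynomial.eval (fun j => ((b j : ℕ) : ℤ))
                  (MvPolynomial.pderiv i f))
              + (p : ℤ) ^ 2 * k : ℤ) : ℂ) / ((p ^ 2 : ℕ) : ℂ))
          = (2 * Real.pi * Complex.I *
              ((MvPolynomial.eval (fun j => ((b j : ℕ) : ℤ)) f : ℤ) : ℂ) / ((p ^ 2 : ℕ) : ℂ)
            + (2 * Real.pi * Complex.I *
              ((∑ i, ((a i : ℕ) : ℤ) * MvPolynomial.eval (fun j => ((b j : ℕ) : ℤ))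
                (MvPolynomial.pderiv i f) : ℤ) : ℂ) / p
            + (k : ℂ) * (2 * Real.pi * Complex.I))) by push_cast; field_simp; ring]
        rw [Complex.exp_add, Complex.exp_add, Complex.exp_int_mul_two_pi_mul_I, mul_one]
      rw [Fintype.sum_congr _ _ hterm, ← Finset.mul_sum,
        vecCharSum p hp0 (fun i => MvPolynomial.eval (fun j => ((b j : ℕ) : ℤ))
          (MvPolynomial.pderiv i f))]
    rw [Fintype.sum_congr _ _ inner]
    simp only [mul_ite, mul_zero]
    rw [← Finset.sum_filter, ← hP, Finset.mul_sum]
    exact (Finset.sum_congr rfl fun b _ => (mul_comm _ _)).symm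
  have habs1 : ∀ m : ℤ, ‖(Complex.exp (2 * Real.pi * Complex.I *
      ((m : ℤ) : ℂ) / ((p ^ 2 : ℕ) : ℂ)))‖ = 1 := by
    intro m
    rw [show (2 * (Real.pi : ℂ) * Complex.I * ((m : ℤ) : ℂ) / ((p ^ 2 : ℕ) : ℂ))
      = (((2 * Real.pi * (m : ℝ) / ((p ^ 2 : ℕ) : ℝ)) : ℝ) : ℂ) * Complex.I by push_cast; ring]
    exact Complex.norm_exp_ofReal_mul_I _
  have hboundS : ‖(∑ b ∈ P, Complex.exp (2 * Real.pi * Complex.I *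
      ((MvPolynomial.eval (fun j => ((b j : ℕ) : ℤ)) f : ℤ) : ℂ) / ((p ^ 2 : ℕ) : ℂ)))‖
      ≤ (P.card : ℝ) := by
    refine le_trans (norm_sum_le _ _) ?_
    rw [Finset.sum_congr rfl fun b _ => habs1 _]
    simp
  have key : ‖expSum f (p ^ 2)‖ ≤ (P.card : ℝ) / (p : ℝ) ^ n := by
    rw [expSum, hsum, norm_mul, norm_mul]
    have e1 : ‖(((p ^ 2 : ℕ) : ℂ)⁻¹)‖ ^ n = (((p : ℝ) ^ 2)⁻¹) ^ n := by
      rw [norm_inv, Complex.norm_natCast]; push_cast; ring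
    have e2 : ‖((p : ℂ) ^ n)‖ = (p : ℝ) ^ n := by
      rw [norm_pow, Complex.norm_natCast]
    rw [norm_pow, e1, e2]
    have e3 : (((p : ℝ) ^ 2)⁻¹) ^ n * ((p : ℝ) ^ n * (P.card : ℝ)) = (P.card : ℝ) / (p : ℝ) ^ n := by
      field_simp
      rw [one_div, inv_pow, ← pow_mul, ← pow_mul, mul_comm 2 n, inv_mul_cancel₀ (pow_ne_zero _ hpR.ne'), one_mul]
    rw [← e3]
    gcongr
  have hrhs : D * ((p : ℝ) ^ 2) ^ (((-n : ℝ) + δ) / 2) = D * ((p : ℝ) ^ δ / (p : ℝ) ^ n) := by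
    congr 1
    rw [← Real.rpow_natCast (p : ℝ) 2, ← Real.rpow_mul hpR.le]
    rw [show ((2 : ℕ) : ℝ) * (((-n : ℝ) + δ) / 2) = -(n : ℝ) + (δ : ℝ) by push_cast; ring]
    rw [Real.rpow_add hpR, Real.rpow_neg hpR.le, Real.rpow_natCast, Real.rpow_natCast]
    field_simp
  rw [hrhs]
  refine le_trans key ?_
  rw [← mul_div_assoc]
  gcongr
end
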